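/- For a topology O on a set X, O is reversible if and only if the set [O]_≅ = { f[O] : f a bijection of X } is an antichain under set inclusion (any two distinct members are incomparable). -/

import Mathlib

open Set Filter TopologicalSpace

variable {X : Type*}

/-- The family of open sets of a topology. -/
def opensOf (O : TopologicalSpace X) : Set (Set X) := {U | O.IsOpen U}

/-- The image family f[O] = { f[U] : U ∈ O } of a topology under a bijection. -/
def imgOpens (f : X ≃ X) (O : TopologicalSpace X) : Set (Set X) :=
  (Set.image f) '' opensOf O

/-- A topology is reversible iff every continuous self-bijection is a homeomorphism. -/
def Reversible (O : TopologicalSpace X) : Prop :=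
  ∀ f : X ≃ X, @Continuous X X O O f → @Continuous X X O O f.symm

/-- The homeomorphism class [O]_≅ of a topology within the topologies on X. -/
def homeoCls (O : TopologicalSpace X) : Set (TopologicalSpace X) :=
  {O' | ∃ f : X ≃ X, imgOpens f O = opensOf O'}

/-- O₁ ≼ O₂ : there is a condensation (continuous bijection) (X,O₂) → (X,O₁). -/
def Cond (O₁ O₂ : TopologicalSpace X) : Prop :=
  ∃ f : X ≃ X, @Continuous X X O₂ O₁ f

/-- The condensational equivalence class [O]_∼. -/
def simCls (O : TopologicalSpace X) : Set (TopologicalSpace X) :=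
  {O' | Cond O' O ∧ Cond O O'}

lemma opensOf_inj {O₁ O₂ : TopologicalSpace X} (h : opensOf O₁ = opensOf O₂) : O₁ = O₂ := by
  refine TopologicalSpace.ext_iff.2 fun s => ?_
  constructor
  · intro hs; exact (h ▸ hs : s ∈ opensOf O₂)
  · intro hs; exact (h ▸ hs : s ∈ opensOf O₁)

lemma mem_imgOpens {f : X ≃ X} {O : TopologicalSpace X} {s : Set X} :
    s ∈ imgOpens f O ↔ ∃ U, O.IsOpen U ∧ f '' U = s := by
  simp [imgOpens, opensOf]

lemma opensOf_coinduced (e : X ≃ X) (O : TopologicalSpace X) :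
    opensOf (O.coinduced e) = imgOpens e O := by
  ext s
  rw [mem_imgOpens]
  constructor
  · intro hs
    exact ⟨e ⁻¹' s, hs, by simp⟩
  · rintro ⟨U, hU, rfl⟩
    show O.IsOpen (e ⁻¹' (e '' U))
    simpa using hU

/-- O is reversible iff [O]_≅ is an antichain under inclusion. -/
theorem stmt_1 (O : TopologicalSpace X) :
    Reversible O ↔
      ∀ O₁ ∈ homeoCls O, ∀ O₂ ∈ homeoCls O, O₁ ≠ O₂ → ¬ opensOf O₁ ⊆ opensOf O₂ := by
  constructor
  · intro hrev O₁ h₁ O₂ h₂ hne hsub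
    apply hne
    obtain ⟨f, hf⟩ := h₁
    obtain ⟨g, hg⟩ := h₂
    -- f[O] ⊆ g[O]
    have hfg : imgOpens f O ⊆ imgOpens g O := by rw [hf, hg]; exact hsub
    set h : X ≃ X := f.trans g.symm with hh
    have hhsymm : @Continuous X X O O h.symm := by
      rw [@continuous_def]
      intro U hU
      have : h.symm ⁻¹' U = h '' U := (Equiv.image_eq_preimage_symm h U).symm
      rw [this]
      obtain ⟨V, hV, hVU⟩ := mem_imgOpens.1 (hfg (mem_imgOpens.2 ⟨U, hU, rfl⟩))
      have : h '' U = V := by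
        rw [hh]
        have : (f.trans g.symm) '' U = g.symm '' (f '' U) := Set.image_comp g.symm f U
        rw [this, ← hVU]
        simp
      rw [this]; exact hV
    have hhcont : @Continuous X X O O h := by
      have := hrev h.symm hhsymm
      simpa using this
    -- show opensOf O₂ ⊆ opensOf O₁
    have hrev2 : opensOf O₂ ⊆ opensOf O₁ := by
      intro V hV
      rw [← hg] at hV
      obtain ⟨U, hU, hUV⟩ := mem_imgOpens.1 hV
      have hopen : O.IsOpen (h ⁻¹' U) :=
        @Continuous.isOpen_preimage X X O O _ hhcont U hU
      have himg : h ⁻¹' U = f.symm '' V := by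
        rw [← hUV, Equiv.image_eq_preimage_symm, Equiv.image_eq_preimage_symm]
        ext x
        simp [hh]
      rw [← hf]
      refine mem_imgOpens.2 ⟨f.symm '' V, himg ▸ hopen, by simp⟩
    exact opensOf_inj (le_antisymm hsub hrev2)
  · intro hanti f hf
    set O₁ : TopologicalSpace X := O.coinduced f.symm with hO₁
    have hmem₁ : O₁ ∈ homeoCls O := ⟨f.symm, (opensOf_coinduced f.symm O).symm⟩
    have hmemO : O ∈ homeoCls O := ⟨Equiv.refl X, by ext s; simp [mem_imgOpens, opensOf]⟩
    have hsub : opensOf O₁ ⊆ opensOf O := by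
      intro s hs
      rw [hO₁, opensOf_coinduced] at hs
      obtain ⟨U, hU, hUs⟩ := mem_imgOpens.1 hs
      show O.IsOpen s
      rw [← hUs, Equiv.image_eq_preimage_symm]
      simp only [Equiv.symm_symm]
      exact @Continuous.isOpen_preimage X X O O _ hf U hU
    have heq : O₁ = O := by
      by_contra hne
      exact hanti O₁ hmem₁ O hmemO hne hsub
    rw [@continuous_def]
    intro U hU
    have : U ∈ opensOf O₁ := heq ▸ hU
    rw [hO₁, opensOf_coinduced] at this
    obtain ⟨V, hV, hVU⟩ := mem_imgOpens.1 this
    have : f.symm ⁻¹' U = V := by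
      rw [← hVU]
      simp [← Equiv.image_eq_preimage_symm]
    rw [this]; exact hV
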